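/- If there exists a pair (α, β) ∈ F_{q^n}^* × F_{q^n} such that α is a primitive element, β is a normal element over F_q, and α^r = f ∘ β where f is a monic divisor of x^n - 1 of degree k and r divides q^n - 1, then the element α^r is simultaneously r-primitive and k-normal over F_q. -/

import Mathlib

open scoped Classical

/-- The `𝔽_q[x]`-module action on `L`: `f ∘ β = ∑ aᵢ β^(q^i)`. -/
noncomputable def polyAct (q : ℕ) {K L : Type*} [Field K] [Field L] [Algebra K L]
    (f : Polynomial K) (β : L) : L :=
  ∑ i ∈ Finset.range (f.natDegree + 1), f.coeff i • β ^ q ^ i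

open Polynomial Finset

open Fin.NatCast in
lemma aux_sum_range_cycle {M : Type*} [AddCommMonoid M] (n j : ℕ) (hn : 0 < n) (g : ℕ → M) :
    ∑ i ∈ Finset.range n, g ((i + j) % n) = ∑ i ∈ Finset.range n, g i := by
  haveI : NeZero n := ⟨hn.ne'⟩
  rw [Finset.sum_range fun i => g ((i + j) % n), Finset.sum_range g]
  rw [← Equiv.sum_comp (Equiv.addRight (j : Fin n)) (fun i : Fin n => g i)]
  refine Finset.sum_congr rfl fun i _ => ?_
  congr 1
  show (↑i + j) % n = ((i + (j:Fin n)) : Fin n).val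
  rw [Fin.add_def, Fin.val_natCast]
  show (i.val + j) % n = (i.val + j % n) % n
  rw [Nat.add_mod i.val (j % n) n, Nat.mod_mod_of_dvd j dvd_rfl, ← Nat.add_mod]

lemma aux_pow_mod {M : Type*} [Monoid M] {t : M} {n : ℕ} (ht : t ^ n = 1) (a : ℕ) :
    t ^ a = t ^ (a % n) := by
  conv_lhs => rw [← Nat.div_add_mod a n]
  rw [pow_add, pow_mul, ht, one_pow, one_mul]

lemma aux_frob (q : ℕ) (K L : Type*) [Field K] [Fintype K] [Field L] [Fintype L]
    [Algebra K L] (hK : Fintype.card K = q) :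
    ∃ F : ℕ → L →+* L, ∀ (m : ℕ) (x : L), F m x = x ^ q ^ m := by
  haveI : CharP K (ringChar K) := ringChar.charP K
  obtain ⟨d, hp, hcard⟩ := FiniteField.card K (ringChar K)
  haveI := Fact.mk hp
  haveI : CharP L (ringChar K) :=
    charP_of_injective_algebraMap (algebraMap K L).injective (ringChar K)
  haveI : ExpChar L (ringChar K) := .prime hp
  refine ⟨fun m => iterateFrobenius L (ringChar K) ((d : ℕ) * m), fun m x => ?_⟩
  rw [iterateFrobenius_def, pow_mul, ← hcard, hK]

lemma aux_fix_pow (q n : ℕ) {L : Type*} [Monoid L] (hfix : ∀ x : L, x ^ q ^ n = x)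
    (x : L) (m : ℕ) : x ^ q ^ m = x ^ q ^ (m % n) := by
  conv_lhs => rw [← Nat.div_add_mod m n]
  rw [pow_add, pow_mul, pow_mul]
  induction (m / n) with
  | zero => simp
  | succ t ih => rw [pow_succ, pow_mul, hfix, ih]

lemma aux_coeff_fix (q : ℕ) {K : Type*} [Field K] [Fintype K] (hK : Fintype.card K = q)
    (c : K) (m : ℕ) : c ^ q ^ m = c := by
  induction m with
  | zero => simp
  | succ t ih => rw [pow_succ, pow_mul, ih, ← hK, FiniteField.pow_card]

lemma aux_normal_coprime (q n : ℕ) (hq : 1 < q) (hn : 0 < n)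
    (K L : Type*) [Field K] [Fintype K] [Field L] [Fintype L] [Algebra K L]
    (hK : Fintype.card K = q) (hcardL : Fintype.card L = q ^ n)
    (β : L) (b : Module.Basis (Fin n) K L) (hb : ∀ i : Fin n, b i = β ^ q ^ (i : ℕ)) :
    IsCoprime (Polynomial.X ^ n - 1 : Polynomial L)
      (∑ i ∈ Finset.range n, Polynomial.C (β ^ q ^ i) * Polynomial.X ^ (n - 1 - i)) := by
  classical
  obtain ⟨F, hF⟩ := aux_frob q K L hK
  have hfixL : ∀ x : L, x ^ q ^ n = x := by
    intro x; rw [← hcardL]; exact FiniteField.pow_card x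
  by_contra hcop
  set A : Polynomial L := Polynomial.X ^ n - 1 with hA
  set B : Polynomial L := ∑ i ∈ Finset.range n, Polynomial.C (β ^ q ^ i) * Polynomial.X ^ (n - 1 - i) with hB
  have hA0 : A ≠ 0 := by
    have := Polynomial.X_pow_sub_C_ne_zero hn (1 : L)
    simpa [hA] using this
  set g : Polynomial L := EuclideanDomain.gcd A B with hg
  have hgu : ¬ IsUnit g := fun h => hcop (EuclideanDomain.gcd_isUnit_iff.mp h)
  have hg0 : g ≠ 0 := fun h => hA0 (EuclideanDomain.gcd_eq_zero_iff.mp h).1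
  have hgdeg : g.degree ≠ 0 := fun h => hgu (Polynomial.isUnit_iff_degree_eq_zero.mpr h)
  set E := AlgebraicClosure L
  set ι : L →+* E := algebraMap L E with hι
  have hιinj : Function.Injective ι := ι.injective
  have hgE : (g.map ι).degree ≠ 0 := by
    rwa [Polynomial.degree_map]
  obtain ⟨θ, hθ⟩ := IsAlgClosed.exists_root (g.map ι) hgE
  have hrootA : (A.map ι).IsRoot θ := hθ.dvd (Polynomial.map_dvd ι (EuclideanDomain.gcd_dvd_left A B))
  have hrootB : (B.map ι).IsRoot θ := hθ.dvd (Polynomial.map_dvd ι (EuclideanDomain.gcd_dvd_right A B))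
  have hθn : θ ^ n = 1 := by
    have := hrootA
    simp only [hA, Polynomial.IsRoot, Polynomial.map_sub, Polynomial.map_pow,
      Polynomial.map_X, Polynomial.map_one, Polynomial.eval_sub, Polynomial.eval_pow,
      Polynomial.eval_X, Polynomial.eval_one, sub_eq_zero] at this
    exact this
  have hθ0 : θ ≠ 0 := by
    intro h; rw [h, zero_pow hn.ne'] at hθn; exact zero_ne_one hθn
  set θu : Eˣ := Units.mk0 θ hθ0 with hθu
  have hθun : θu ^ n = 1 := by
    ext; rw [Units.val_pow_eq_pow_val]; exact hθn
  have hz : ∀ a c : ℤ, (n:ℤ) ∣ a - c → θu ^ a = θu ^ c := by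
    intro a c ⟨t, ht⟩
    have : a = c + n * t := by linarith
    rw [this, zpow_add, zpow_mul, zpow_natCast, hθun, one_zpow, mul_one]
  have hΛβ : ∑ i ∈ Finset.range n, ι (β ^ q ^ i) * θ ^ (n - 1 - i) = 0 := by
    have := hrootB
    simp only [hB, Polynomial.IsRoot, Polynomial.map_sum, Polynomial.map_mul,
      Polynomial.map_C, Polynomial.map_pow, Polynomial.map_X, Polynomial.eval_finset_sum,
      Polynomial.eval_mul, Polynomial.eval_C, Polynomial.eval_pow, Polynomial.eval_X] at this
    exact this
  -- integer-exponent version of the terms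
  set Λ' : ℕ → E := fun m => ι (β ^ q ^ m) * ((θu ^ ((n:ℤ) - 1 - m)) : Eˣ) with hΛ'
  have hnat : ∀ m, m < n → ι (β ^ q ^ m) * θ ^ (n - 1 - m) = Λ' m := by
    intro m hm
    show ι (β ^ q ^ m) * θ ^ (n - 1 - m) = ι (β ^ q ^ m) * ((θu ^ ((n:ℤ) - 1 - (m:ℤ)) : Eˣ) : E)
    have : ((n - 1 - m : ℕ) : ℤ) = (n:ℤ) - 1 - m := by omega
    rw [← this, zpow_natCast, Units.val_pow_eq_pow_val]
    rfl
  have hΛ'sum : ∑ m ∈ Finset.range n, Λ' m = 0 := by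
    rw [← Finset.sum_congr rfl fun m hm => hnat m (Finset.mem_range.mp hm)]
    exact hΛβ
  -- Λ of cyclic shifts of β vanishes
  have hshift : ∀ j : ℕ, ∑ i ∈ Finset.range n, ι ((β ^ q ^ j) ^ q ^ i) * θ ^ (n - 1 - i) = 0 := by
    intro j
    have step1 : ∀ i : ℕ, (β ^ q ^ j) ^ q ^ i = β ^ q ^ ((i + j) % n) := by
      intro i
      rw [← pow_mul, ← pow_add, aux_fix_pow q n hfixL β (j + i), Nat.add_comm j i]
    have step2 : ∀ i ∈ Finset.range n,
        ι ((β ^ q ^ j) ^ q ^ i) * θ ^ (n - 1 - i)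
          = ((θu ^ (j:ℤ)) : Eˣ) * Λ' ((i + j) % n) := by
      intro i hi
      have hi' := Finset.mem_range.mp hi
      rw [step1 i, hΛ']
      have e1 : θ ^ (n - 1 - i) = ((θu ^ ((n:ℤ) - 1 - i)) : Eˣ) := by
        have : ((n - 1 - i : ℕ) : ℤ) = (n:ℤ) - 1 - i := by omega
        rw [← this, zpow_natCast, Units.val_pow_eq_pow_val]; rfl
      have e2 : θu ^ ((n:ℤ) - 1 - (i:ℤ)) = θu ^ (j:ℤ) * θu ^ ((n:ℤ) - 1 - (((i + j) % n : ℕ) : ℤ)) := by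
        rw [← zpow_add]
        apply hz
        have hN : ((i + j) % n : ℕ) + n * ((i + j) / n) = i + j := Nat.mod_add_div _ _
        have hN' : (((i + j) % n : ℕ) : ℤ) + (n : ℤ) * (((i + j) / n : ℕ) : ℤ)
            = (i : ℤ) + (j : ℤ) := by exact_mod_cast hN
        exact ⟨-(((i + j) / n : ℕ) : ℤ), by linarith⟩
      rw [e1, e2]
      push_cast [Units.val_mul]
      ring
    rw [Finset.sum_congr rfl step2, ← Finset.mul_sum,
      aux_sum_range_cycle n j hn Λ', hΛ'sum, mul_zero]
  -- Λ vanishes on all of L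
  have hall : ∀ x : L, ∑ i ∈ Finset.range n, ι (x ^ q ^ i) * θ ^ (n - 1 - i) = 0 := by
    intro x
    have hx : x ∈ Submodule.span K (Set.range ⇑b) := by
      rw [b.span_eq]; trivial
    induction hx using Submodule.span_induction with
    | mem y hy =>
        obtain ⟨i, rfl⟩ := hy
        rw [hb i]
        exact hshift i
    | zero =>
        refine Finset.sum_eq_zero fun i _ => ?_
        rw [zero_pow (pow_ne_zero i (by omega : q ≠ 0)), map_zero, zero_mul]
    | add y z hy hz hy' hz' =>
        have : ∀ i : ℕ, (y + z) ^ q ^ i = y ^ q ^ i + z ^ q ^ i := by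
          intro i; rw [← hF i, ← hF i, ← hF i, map_add]
        calc ∑ i ∈ Finset.range n, ι ((y + z) ^ q ^ i) * θ ^ (n - 1 - i)
            = ∑ i ∈ Finset.range n, (ι (y ^ q ^ i) * θ ^ (n - 1 - i)
                + ι (z ^ q ^ i) * θ ^ (n - 1 - i)) := by
              refine Finset.sum_congr rfl fun i _ => ?_
              rw [this i, map_add, add_mul]
          _ = 0 := by rw [Finset.sum_add_distrib, hy', hz', add_zero]
    | smul c y hy hy' =>
        have : ∀ i : ℕ, (c • y) ^ q ^ i = algebraMap K L c * y ^ q ^ i := by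
          intro i
          rw [Algebra.smul_def, mul_pow, ← map_pow, aux_coeff_fix q hK c i]
        calc ∑ i ∈ Finset.range n, ι ((c • y) ^ q ^ i) * θ ^ (n - 1 - i)
            = ι (algebraMap K L c) * ∑ i ∈ Finset.range n, ι (y ^ q ^ i) * θ ^ (n - 1 - i) := by
              rw [Finset.mul_sum]
              refine Finset.sum_congr rfl fun i _ => ?_
              rw [this i, map_mul]; ring
          _ = 0 := by rw [hy', mul_zero]
  -- the contradiction polynomial
  set P : Polynomial E := ∑ i ∈ Finset.range n, Polynomial.C (θ ^ (n - 1 - i)) * Polynomial.X ^ (q ^ i) with hP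
  have hProot : ∀ x : L, P.IsRoot (ι x) := by
    intro x
    rw [hP, Polynomial.IsRoot, Polynomial.eval_finset_sum]
    have : ∀ i ∈ Finset.range n,
        Polynomial.eval (ι x) (Polynomial.C (θ ^ (n - 1 - i)) * Polynomial.X ^ (q ^ i))
          = ι (x ^ q ^ i) * θ ^ (n - 1 - i) := by
      intro i _
      rw [Polynomial.eval_mul, Polynomial.eval_C, Polynomial.eval_pow, Polynomial.eval_X,
        map_pow]
      ring
    rw [Finset.sum_congr rfl this]
    exact hall x
  have hPne : P ≠ 0 := by
    intro h
    have hc : P.coeff (q ^ (n - 1)) = 1 := by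
      rw [hP, Polynomial.finset_sum_coeff]
      have : ∀ i ∈ Finset.range n,
          (Polynomial.C (θ ^ (n - 1 - i)) * Polynomial.X ^ (q ^ i)).coeff (q ^ (n - 1))
            = if i = n - 1 then 1 else 0 := by
        intro i hi
        rw [Polynomial.coeff_C_mul, Polynomial.coeff_X_pow]
        by_cases hieq : i = n - 1
        · subst hieq; simp
        · have : q ^ (n - 1) ≠ q ^ i := by
            intro h'
            exact hieq (Nat.pow_right_injective hq h').symm
          simp [this, hieq]
      rw [Finset.sum_congr rfl this, Finset.sum_ite_eq' (Finset.range n) (n - 1) fun _ => (1:E)]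
      simp [Finset.mem_range, Nat.sub_lt hn Nat.one_pos]
    rw [h] at hc
    simp at hc
  have hPdeg : P.natDegree ≤ q ^ (n - 1) := by
    rw [hP]
    refine Polynomial.natDegree_sum_le_of_forall_le _ _ fun i hi => ?_
    refine le_trans (Polynomial.natDegree_C_mul_X_pow_le _ _) ?_
    have : i < n := Finset.mem_range.mp hi
    exact Nat.pow_le_pow_right (by omega) (by omega : i ≤ n - 1)
  -- counting roots
  have hcard : Fintype.card L ≤ P.natDegree := by
    have hsub : (Finset.univ.image fun x : L => ι x) ⊆ P.roots.toFinset := by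
      intro y hy
      obtain ⟨x, _, rfl⟩ := Finset.mem_image.mp hy
      rw [Multiset.mem_toFinset, Polynomial.mem_roots hPne]
      exact hProot x
    calc Fintype.card L = (Finset.univ.image fun x : L => ι x).card := by
          rw [Finset.card_image_of_injective _ hιinj, Finset.card_univ]
      _ ≤ P.roots.toFinset.card := Finset.card_le_card hsub
      _ ≤ Multiset.card P.roots := Multiset.toFinset_card_le _
      _ ≤ P.natDegree := Polynomial.card_roots' P
  have : q ^ n ≤ q ^ (n - 1) := by
    calc q ^ n = Fintype.card L := hcardL.symm
      _ ≤ P.natDegree := hcard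
      _ ≤ q ^ (n - 1) := hPdeg
  have : q ^ (n - 1) < q ^ n := Nat.pow_lt_pow_right hq (by omega)
  omega

lemma aux_congr (q n : ℕ) (hn : 0 < n)
    (K L : Type*) [Field K] [Fintype K] [Field L] [Fintype L] [Algebra K L]
    (hK : Fintype.card K = q) (hcardL : Fintype.card L = q ^ n)
    (f : Polynomial K) (β γ : L) (hrel : γ = polyAct q f β) :
    (Polynomial.X ^ n - 1 : Polynomial L) ∣
      (∑ i ∈ Finset.range n, Polynomial.C (γ ^ q ^ i) * Polynomial.X ^ (n - 1 - i))
        - (f.map (algebraMap K L))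
          * (∑ i ∈ Finset.range n, Polynomial.C (β ^ q ^ i) * Polynomial.X ^ (n - 1 - i)) := by
  classical
  obtain ⟨F, hF⟩ := aux_frob q K L hK
  have hfixL : ∀ x : L, x ^ q ^ n = x := by
    intro x; rw [← hcardL]; exact FiniteField.pow_card x
  set I : Ideal (Polynomial L) := Ideal.span {Polynomial.X ^ n - 1} with hI
  rw [← Ideal.mem_span_singleton (α := Polynomial L), ← hI, ← Ideal.Quotient.eq]
  set φ := Ideal.Quotient.mk I with hφ
  set t := φ Polynomial.X with htdef
  have ht : t ^ n = 1 := by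
    have h0 : φ (Polynomial.X ^ n - 1) = 0 :=
      Ideal.Quotient.eq_zero_iff_mem.mpr (Ideal.subset_span (Set.mem_singleton _))
    rw [map_sub, map_pow, map_one, sub_eq_zero] at h0
    exact h0
  -- expansion of gamma powers
  have hγ : ∀ m : ℕ, γ ^ q ^ m
      = ∑ j ∈ Finset.range (f.natDegree + 1),
          algebraMap K L (f.coeff j) * β ^ q ^ ((m + j) % n) := by
    intro m
    rw [hrel, polyAct, ← hF m, map_sum]
    refine Finset.sum_congr rfl fun j _ => ?_
    rw [hF m, Algebra.smul_def, mul_pow, ← map_pow, aux_coeff_fix q hK, ← pow_mul, ← pow_add,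
      aux_fix_pow q n hfixL β (j + m), Nat.add_comm j m]
  -- abbreviations
  set cA : ℕ → _ := fun j => φ (Polynomial.C (algebraMap K L (f.coeff j))) with hcA
  set cB : ℕ → _ := fun i => φ (Polynomial.C (β ^ q ^ i)) with hcB
  -- LHS
  have hLHS : φ (∑ i ∈ Finset.range n, Polynomial.C (γ ^ q ^ i) * Polynomial.X ^ (n - 1 - i))
      = ∑ j ∈ Finset.range (f.natDegree + 1), cA j
          * ∑ m ∈ Finset.range n, cB ((m + j) % n) * t ^ (n - 1 - m) := by
    rw [map_sum]
    have hterm : ∀ m ∈ Finset.range n,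
        φ (Polynomial.C (γ ^ q ^ m) * Polynomial.X ^ (n - 1 - m))
          = ∑ j ∈ Finset.range (f.natDegree + 1), cA j * (cB ((m + j) % n) * t ^ (n - 1 - m)) := by
      intro m _
      have e1 : Polynomial.C (γ ^ q ^ m) = ∑ j ∈ Finset.range (f.natDegree + 1),
          Polynomial.C (algebraMap K L (f.coeff j)) * Polynomial.C (β ^ q ^ ((m + j) % n)) := by
        rw [hγ m, map_sum]
        exact Finset.sum_congr rfl fun j _ => by rw [map_mul]
      rw [map_mul, e1, map_sum, Finset.sum_mul, map_pow φ Polynomial.X (n - 1 - m)]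
      refine Finset.sum_congr rfl fun j _ => ?_
      rw [map_mul φ (Polynomial.C (algebraMap K L (f.coeff j))) (Polynomial.C (β ^ q ^ ((m + j) % n)))]
      show φ (Polynomial.C (algebraMap K L (f.coeff j))) * φ (Polynomial.C (β ^ q ^ ((m + j) % n)))
          * t ^ (n - 1 - m) = cA j * (cB ((m + j) % n) * t ^ (n - 1 - m))
      ring
    rw [Finset.sum_congr rfl hterm, Finset.sum_comm]
    exact Finset.sum_congr rfl fun j _ => by rw [Finset.mul_sum]
  -- RHS
  have hfdecomp : f.map (algebraMap K L)
      = ∑ j ∈ Finset.range (f.natDegree + 1),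
          Polynomial.C (algebraMap K L (f.coeff j)) * Polynomial.X ^ j := by
    conv_lhs => rw [f.as_sum_range' (f.natDegree + 1) (Nat.lt_succ_self _)]
    rw [Polynomial.map_sum]
    refine Finset.sum_congr rfl fun j _ => ?_
    rw [Polynomial.map_monomial, Polynomial.C_mul_X_pow_eq_monomial]
  have hRHS : φ ((f.map (algebraMap K L))
        * (∑ i ∈ Finset.range n, Polynomial.C (β ^ q ^ i) * Polynomial.X ^ (n - 1 - i)))
      = ∑ j ∈ Finset.range (f.natDegree + 1), cA j
          * ∑ i ∈ Finset.range n, cB i * t ^ (j + (n - 1 - i)) := by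
    rw [map_mul, hfdecomp, map_sum, map_sum, Finset.sum_mul]
    refine Finset.sum_congr rfl fun j _ => ?_
    rw [map_mul φ (Polynomial.C (algebraMap K L (f.coeff j))) (Polynomial.X ^ j),
      map_pow φ Polynomial.X j, Finset.mul_sum, Finset.mul_sum]
    refine Finset.sum_congr rfl fun i _ => ?_
    rw [map_mul φ (Polynomial.C (β ^ q ^ i)) (Polynomial.X ^ (n - 1 - i)),
      map_pow φ Polynomial.X (n - 1 - i), pow_add]
    show cA j * t ^ j * (cB i * t ^ (n - 1 - i)) = cA j * (cB i * (t ^ j * t ^ (n - 1 - i)))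
    ring
  rw [hLHS, hRHS]
  -- per-j cyclic identity
  refine Finset.sum_congr rfl fun j _ => ?_
  congr 1
  set g : ℕ → _ := fun m' => cB (m' % n) * t ^ ((j + (n - 1) - m' % n) % n) with hgdef
  have claim2 : ∀ m ∈ Finset.range n, cB ((m + j) % n) * t ^ (n - 1 - m) = g ((m + j) % n) := by
    intro m hm
    have hmn := Finset.mem_range.mp hm
    have hs : (m + j) % n < n := Nat.mod_lt _ hn
    show cB ((m + j) % n) * t ^ (n - 1 - m)
        = cB ((m + j) % n % n) * t ^ ((j + (n - 1) - (m + j) % n % n) % n)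
    rw [Nat.mod_eq_of_lt hs]
    congr 1
    have hN : (m + j) % n + n * ((m + j) / n) = m + j := Nat.mod_add_div _ _
    set D := n * ((m + j) / n) with hD
    have he : j + (n - 1) - (m + j) % n = (n - 1 - m) + D := by omega
    rw [he, hD, Nat.add_mul_mod_self_left, Nat.mod_eq_of_lt (by omega : n - 1 - m < n)]
  have claim1 : ∀ i ∈ Finset.range n, cB i * t ^ (j + (n - 1 - i)) = g i := by
    intro i hi
    have hin := Finset.mem_range.mp hi
    show cB i * t ^ (j + (n - 1 - i)) = cB (i % n) * t ^ ((j + (n - 1) - i % n) % n)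
    rw [Nat.mod_eq_of_lt hin]
    congr 1
    have he : j + (n - 1 - i) = j + (n - 1) - i := by omega
    rw [he]
    exact aux_pow_mod ht _
  rw [Finset.sum_congr rfl claim2, Finset.sum_congr rfl claim1]
  exact aux_sum_range_cycle n j hn g

theorem stmt12 (q n r k : ℕ) (hq : 1 < q) (hn : 0 < n)
    (K : Type*) [Field K] [Fintype K] (hK : Fintype.card K = q)
    (L : Type*) [Field L] [Fintype L] [Algebra K L]
    (hrank : Module.finrank K L = n)
    (hr : r ∣ q ^ n - 1) (hr0 : 0 < r)
    (f : Polynomial K) (hmonic : f.Monic) (hdvd : f ∣ Polynomial.X ^ n - 1)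
    (hdeg : f.natDegree = k)
    (α : Lˣ) (hα : ∀ x : Lˣ, x ∈ Subgroup.zpowers α)
    (β : L) (b : Module.Basis (Fin n) K L) (hb : ∀ i : Fin n, b i = β ^ q ^ (i : ℕ))
    (hrel : (α : L) ^ r = polyAct q f β) :
    orderOf (α ^ r) = (q ^ n - 1) / r ∧
      (EuclideanDomain.gcd (Polynomial.X ^ n - 1 : Polynomial L)
        (∑ i ∈ Finset.range n,
          Polynomial.C (((α : L) ^ r) ^ q ^ i) * Polynomial.X ^ (n - 1 - i))).natDegree
        = k := by
  classical
  have hcardL : Fintype.card L = q ^ n := by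
    rw [Module.card_fintype b, hK, Fintype.card_fin]
  constructor
  · have ho : orderOf α = q ^ n - 1 := by
      rw [orderOf_eq_card_of_forall_mem_zpowers hα, Nat.card_eq_fintype_card,
        Fintype.card_units, hcardL]
    rw [orderOf_pow, ho, Nat.gcd_eq_right hr]
  · set γ : L := (α : L) ^ r with hγdef
    set A : Polynomial L := Polynomial.X ^ n - 1 with hA
    set G : Polynomial L :=
      ∑ i ∈ Finset.range n, Polynomial.C (γ ^ q ^ i) * Polynomial.X ^ (n - 1 - i) with hG
    set Gβ : Polynomial L :=
      ∑ i ∈ Finset.range n, Polynomial.C (β ^ q ^ i) * Polynomial.X ^ (n - 1 - i) with hGβ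
    set fL : Polynomial L := f.map (algebraMap K L) with hfL
    have hcong : A ∣ G - fL * Gβ := aux_congr q n hn K L hK hcardL f β γ hrel
    have hcop : IsCoprime A Gβ := aux_normal_coprime q n hq hn K L hK hcardL β b hb
    have hA0 : A ≠ 0 := by
      have := Polynomial.X_pow_sub_C_ne_zero hn (1 : L)
      simpa [hA] using this
    have hfL_dvd_A : fL ∣ A := by
      have h := Polynomial.map_dvd (algebraMap K L) hdvd
      simpa [hA, hfL, Polynomial.map_sub, Polynomial.map_pow, Polynomial.map_X,
        Polynomial.map_one] using h
    have hfLG : fL ∣ G := by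
      have hsplit : G = (G - fL * Gβ) + fL * Gβ := by ring
      rw [hsplit]
      exact dvd_add (hfL_dvd_A.trans hcong) (dvd_mul_right _ _)
    set d : Polynomial L := EuclideanDomain.gcd A G with hd
    have hd0 : d ≠ 0 := fun h => hA0 (EuclideanDomain.gcd_eq_zero_iff.mp h).1
    have h1 : fL ∣ d := EuclideanDomain.dvd_gcd hfL_dvd_A hfLG
    have hdA : d ∣ A := EuclideanDomain.gcd_dvd_left A G
    have hdG : d ∣ G := EuclideanDomain.gcd_dvd_right A G
    have hdfGβ : d ∣ fL * Gβ := by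
      have hsplit : fL * Gβ = G - (G - fL * Gβ) := by ring
      rw [hsplit]
      exact dvd_sub hdG (hdA.trans hcong)
    have hcopd : IsCoprime d Gβ := IsCoprime.of_isCoprime_of_dvd_left hcop hdA
    have h2 : d ∣ fL := hcopd.dvd_of_dvd_mul_right hdfGβ
    have hfL0 : fL ≠ 0 := (hmonic.map (algebraMap K L)).ne_zero
    have hdeq : d.natDegree = fL.natDegree :=
      le_antisymm (Polynomial.natDegree_le_of_dvd h2 hfL0)
        (Polynomial.natDegree_le_of_dvd h1 hd0)
    show d.natDegree = k
    rw [hdeq, hfL, Polynomial.natDegree_map, hdeg]
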